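/- Let X be a type, f : X → ℝ, and g, w : X × X → ℝ with g(x, y) = −g(y, x) and w(x, y) = w(y, x) for all x, y ∈ X, and |s(f(x) − f(x')) − s(g(x, x'))| ≤ w(x, x') for all x, x' ∈ X. Define the plausible maximizer set M = { x ∈ X : ∀ x' ∈ X, s(g(x, x')) + w(x, x') ≥ 1/2 }. Let c ≥ 0 and set κ = 1/(s(c)·(1 − s(c))). Suppose x* ∈ X satisfies f(x) ≤ f(x*) for all x ∈ X, and suppose x_t, x_t' ∈ M satisfy: (i) w(x_t, x_t) = 0; (ii) x_t' minimizes the lower confidence bound against x_t over M, i.e., s(g(x_t, x_t')) − w(x_t, x_t') ≤ s(g(x_t, x')) − w(x_t, x') for every x' ∈ M; and (iii) 0 ≤ f(x_t) − f(x_t') ≤ c. Then s(f(x*) − f(x_t)) + s(f(x*) − f(x_t')) − 1 ≤ (4 + κ)·w(x_t, x_t'). -/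

import Mathlib

noncomputable def sigmoid (z : ℝ) : ℝ := 1 / (1 + Real.exp (-z))

lemma one_add_exp_pos (z : ℝ) : 0 < 1 + Real.exp (-z) := by positivity

lemma sigmoid_pos (z : ℝ) : 0 < sigmoid z := by
  unfold sigmoid; positivity

lemma sigmoid_lt_one (z : ℝ) : sigmoid z < 1 := by
  unfold sigmoid
  rw [div_lt_one (one_add_exp_pos z)]
  linarith [Real.exp_pos (-z)]

lemma sigmoid_zero : sigmoid 0 = 1/2 := by
  simp [sigmoid]
  norm_num

lemma sigmoid_neg (z : ℝ) : sigmoid (-z) = 1 - sigmoid z := by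
  unfold sigmoid
  have h1 := one_add_exp_pos z
  have h2 := one_add_exp_pos (-z)
  rw [neg_neg]
  field_simp
  have he : Real.exp z * Real.exp (-z) = 1 := by rw [← Real.exp_add, add_neg_cancel, Real.exp_zero]
  linear_combination -he

lemma sigmoid_mono : Monotone sigmoid := by
  intro a b hab
  unfold sigmoid
  exact one_div_le_one_div_of_le (one_add_exp_pos b)
    (by linarith [Real.exp_le_exp.mpr (neg_le_neg hab)])

lemma sigmoid_hasDerivAt (z : ℝ) :
    HasDerivAt sigmoid (sigmoid z * (1 - sigmoid z)) z := by
  have h1 := one_add_exp_pos z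
  have h : HasDerivAt (fun z : ℝ => (1 + Real.exp (-z))⁻¹)
      (-(-Real.exp (-z)) / (1 + Real.exp (-z))^2) z := by
    have hexp : HasDerivAt (fun z : ℝ => 1 + Real.exp (-z)) (-Real.exp (-z)) z := by
      have := (Real.hasDerivAt_exp (-z)).comp z ((hasDerivAt_id z).neg)
      simpa using (this.const_add 1)
    exact hexp.inv (by positivity)
  have heq : (fun z : ℝ => (1 + Real.exp (-z))⁻¹) = sigmoid := by
    funext x; simp [sigmoid, one_div]
  rw [heq] at h
  convert h using 1
  have : 1 - sigmoid z = Real.exp (-z) / (1 + Real.exp (-z)) := by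
    unfold sigmoid; field_simp; ring
  rw [this]
  unfold sigmoid
  field_simp

lemma sigmoid_deriv_le_quarter (z : ℝ) : sigmoid z * (1 - sigmoid z) ≤ 1/4 := by
  nlinarith [sq_nonneg (sigmoid z - 1/2)]

lemma sigmoid_lipschitz {a b : ℝ} (hab : a ≤ b) :
    sigmoid b - sigmoid a ≤ (b - a)/4 := by
  rcases eq_or_lt_of_le hab with h | h
  · simp [h]
  · obtain ⟨ξ, _, hξ⟩ := exists_hasDerivAt_eq_slope sigmoid
      (fun z => sigmoid z * (1 - sigmoid z)) h
      (fun z _ => (sigmoid_hasDerivAt z).continuousAt.continuousWithinAt)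
      (fun z _ => sigmoid_hasDerivAt z)
    have h4 := sigmoid_deriv_le_quarter ξ
    rw [hξ] at h4
    rw [div_le_iff₀ (by linarith)] at h4
    linarith

lemma sigmoid_lower {z c : ℝ} (h0 : 0 ≤ z) (hzc : z ≤ c) :
    sigmoid c * (1 - sigmoid c) * z ≤ sigmoid z - 1/2 := by
  rcases eq_or_lt_of_le h0 with h | h
  · simp [← h, sigmoid_zero]
  · obtain ⟨ξ, hξmem, hξ⟩ := exists_hasDerivAt_eq_slope sigmoid
      (fun z => sigmoid z * (1 - sigmoid z)) h
      (fun z _ => (sigmoid_hasDerivAt z).continuousAt.continuousWithinAt)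
      (fun z _ => sigmoid_hasDerivAt z)
    have hξ0 : (0:ℝ) ≤ ξ := le_of_lt hξmem.1
    have h1 : sigmoid ξ ≤ sigmoid c := sigmoid_mono (le_trans (le_of_lt hξmem.2) hzc)
    have h2 : (1:ℝ)/2 ≤ sigmoid ξ := by
      have := sigmoid_mono hξ0; rwa [sigmoid_zero] at this
    have h3 : sigmoid c < 1 := sigmoid_lt_one c
    have hkey : sigmoid c * (1 - sigmoid c) ≤ sigmoid ξ * (1 - sigmoid ξ) := by
      nlinarith
    rw [sigmoid_zero] at hξ
    have := hξ ▸ hkey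
    rw [le_div_iff₀ (by linarith)] at this
    nlinarith

theorem maxminlcb_single_step_dueling_regret
    (X : Type*) (f : X → ℝ) (g w : X → X → ℝ)
    (hg : ∀ x y, g x y = -g y x) (hw : ∀ x y, w x y = w y x)
    (hconf : ∀ x x', |sigmoid (f x - f x') - sigmoid (g x x')| ≤ w x x')
    (M : Set X)
    (hM : M = {x : X | ∀ x', 1 / 2 ≤ sigmoid (g x x') + w x x'})
    (c κ : ℝ) (hc : 0 ≤ c) (hκ : κ = 1 / (sigmoid c * (1 - sigmoid c)))
    (xstar : X) (hstar : ∀ x, f x ≤ f xstar)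
    (xt xt' : X) (hxt : xt ∈ M) (hxt' : xt' ∈ M)
    (hw0 : w xt xt = 0)
    (hmin : ∀ x' ∈ M, sigmoid (g xt xt') - w xt xt' ≤ sigmoid (g xt x') - w xt x')
    (hgap0 : 0 ≤ f xt - f xt') (hgapc : f xt - f xt' ≤ c) :
    sigmoid (f xstar - f xt) + sigmoid (f xstar - f xt') - 1 ≤ (4 + κ) * w xt xt' := by
  set W := w xt xt' with hW
  set z := f xt - f xt' with hz
  clear_value W z
  -- basic positivity
  have hsc0 : 0 < sigmoid c := sigmoid_pos c
  have hsc1 : sigmoid c < 1 := sigmoid_lt_one c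
  have hd : 0 < sigmoid c * (1 - sigmoid c) := by nlinarith
  have hκ0 : 0 ≤ κ := by rw [hκ]; positivity
  have hW0 : 0 ≤ W := hW ▸ le_trans (abs_nonneg _) (hconf xt xt')
  -- xstar ∈ M
  have hxstar : xstar ∈ M := by
    rw [hM]
    intro x'
    have h1 := abs_le.mp (hconf xstar x')
    have h2 : (1:ℝ)/2 ≤ sigmoid (f xstar - f x') := by
      have := sigmoid_mono (show (0:ℝ) ≤ f xstar - f x' by linarith [hstar x'])
      rwa [sigmoid_zero] at this
    linarith [h1.1]
  -- hmin at xstar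
  have hmin1 := hmin xstar hxstar
  have hconf1 := abs_le.mp (hconf xt xstar)
  -- sigmoid (g xt xstar) ≤ sigmoid (f xt - f xstar) + w xt xstar
  have hA1 : sigmoid (g xt xt') - W ≤ sigmoid (f xt - f xstar) := by
    linarith [hconf1.2]
  have hrefl : sigmoid (f xt - f xstar) = 1 - sigmoid (f xstar - f xt) := by
    rw [← sigmoid_neg]; ring_nf
  -- confidence at (xt, xt') and (xt', xt)
  have hconf2 := abs_le.mp (hconf xt xt')
  rw [← hz, ← hW] at hconf2
  have hconf3 := abs_le.mp (hconf xt' xt)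
  -- A ≤ 1 - sigmoid z + 2W : from hA1, sigmoid z ≤ sigmoid (g xt xt') + W
  have hA : sigmoid (f xstar - f xt) ≤ 1 - sigmoid z + 2*W := by
    have : sigmoid z - W ≤ sigmoid (g xt xt') := by linarith [hconf2.1]
    linarith [hrefl ▸ hA1]
  -- xt' ∈ M gives sigmoid (g xt xt') ≤ 1/2 + W
  have hxt'M : (1:ℝ)/2 ≤ sigmoid (g xt' xt) + w xt' xt := by
    rw [hM] at hxt'; exact hxt' xt
  rw [hw xt' xt, ← hW] at hxt'M
  have hgsym : sigmoid (g xt' xt) = 1 - sigmoid (g xt xt') := by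
    rw [hg xt' xt, sigmoid_neg]
  have hgle : sigmoid (g xt xt') ≤ 1/2 + W := by
    rw [hgsym] at hxt'M
    linarith
  -- so sigmoid z ≤ 1/2 + 2W
  have hsz : sigmoid z ≤ 1/2 + 2*W := by linarith [hconf2.2]
  -- z ≤ 2κW
  have hzbound : z ≤ 2 * κ * W := by
    have hlow := sigmoid_lower hgap0 hgapc
    have h2 : z ≤ 2*W / (sigmoid c * (1 - sigmoid c)) := by
      rw [le_div_iff₀ hd]; nlinarith
    rw [hκ]
    calc z ≤ 2*W / (sigmoid c * (1 - sigmoid c)) := h2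
      _ = 2 * (1 / (sigmoid c * (1 - sigmoid c))) * W := by ring
  -- B ≤ A + z/4
  have hB : sigmoid (f xstar - f xt') ≤ sigmoid (f xstar - f xt) + z/4 := by
    have hle : f xstar - f xt ≤ f xstar - f xt' := by linarith
    have := sigmoid_lipschitz hle
    have heq : (f xstar - f xt') - (f xstar - f xt) = z := by rw [hz]; ring
    rw [heq] at this
    linarith
  -- sigmoid z ≥ 1/2
  have hsz2 : (1:ℝ)/2 ≤ sigmoid z := by
    have := sigmoid_mono hgap0; rwa [sigmoid_zero] at this
  -- combine
  nlinarith [mul_nonneg hκ0 hW0]
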